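/- Mandel's theorem for oriented matroids: if (E, L) is an oriented matroid with tope set T, then L = {X ∈ {-1,0,1}^E : ∀ T ∈ T, X ∘ T ∈ T}. -/
import Mathlib


variable {E : Type*}

/-- Composition of sign vectors: (X ∘ Y)_e = X_e if X_e ≠ 0, else Y_e. -/
def comp (X Y : E → SignType) : E → SignType := fun e => if X e = 0 then Y e else X e

/-- Sign-vector partial order: X ⪯ Y iff X_e ∈ {0, Y_e} for all e. -/
def sle (X Y : E → SignType) : Prop := ∀ e, X e = 0 ∨ X e = Y e

/-- Face symmetry condition (FS). -/
def FS (L : Set (E → SignType)) : Prop := ∀ X ∈ L, ∀ Y ∈ L, comp X (-Y) ∈ L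

/-- Composition condition (C). -/
def Comp (L : Set (E → SignType)) : Prop := ∀ X ∈ L, ∀ Y ∈ L, comp X Y ∈ L

/-- Symmetry condition (SymCond). -/
def SymCond (L : Set (E → SignType)) : Prop := ∀ X ∈ L, -X ∈ L

/-- Strong elimination condition (SE). -/
def SE (L : Set (E → SignType)) : Prop :=
  ∀ X ∈ L, ∀ Y ∈ L, ∀ e, X e = -Y e → X e ≠ 0 →
    ∃ Z ∈ L, Z e = 0 ∧ ∀ f, ¬(X f = -Y f ∧ X f ≠ 0) → Z f = comp X Y f

/-- A tope: a maximal element of L with respect to `sle`. -/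
def IsTope (L : Set (E → SignType)) (T : E → SignType) : Prop :=
  T ∈ L ∧ ∀ Z ∈ L, sle T Z → Z = T

lemma comp_assoc' (X Y Z : E → SignType) : comp (comp X Y) Z = comp X (comp Y Z) := by
  funext e
  by_cases hx : X e = 0 <;> by_cases hy : Y e = 0 <;> simp [comp, hx, hy]

lemma sle_comp (X Y : E → SignType) : sle X (comp X Y) := by
  intro e
  by_cases h : X e = 0
  · exact Or.inl h
  · exact Or.inr (by simp [comp, h])

lemma signNegZero (s : SignType) : -s = 0 ↔ s = 0 := by cases s <;> simp

lemma signEqNegSelf (s : SignType) (h : s = -s) : s = 0 := by cases s <;> simp_all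

/-- zero set of a sign vector -/
def zset [Fintype E] (X : E → SignType) : Finset E := Finset.univ.filter (fun e => X e = 0)

lemma mem_zset [Fintype E] (X : E → SignType) (e : E) : e ∈ zset X ↔ X e = 0 := by
  simp [zset]

lemma sle_zset [Fintype E] {X Z : E → SignType} (h : sle X Z) : zset Z ⊆ zset X := by
  intro e he
  rw [mem_zset] at he ⊢
  rcases h e with h' | h'
  · exact h'
  · rw [h', he]

lemma eq_of_sle_zset [Fintype E] {X Z : E → SignType} (h : sle X Z) (hz : zset Z = zset X) :
    Z = X := by
  funext e
  rcases h e with h' | h'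
  · have : e ∈ zset Z := by rw [hz, mem_zset]; exact h'
    rw [mem_zset] at this
    rw [this, h']
  · exact h'.symm

/-- A covector composed with a tope is a tope. -/
lemma tope_comp {L : Set (E → SignType)} (hC : Comp L) {X T : E → SignType}
    (hX : X ∈ L) (hT : IsTope L T) : IsTope L (comp X T) := by
  refine ⟨hC X hX T hT.1, fun Z hZ hsle => ?_⟩
  have hTZ : comp T Z = T := hT.2 _ (hC T hT.1 Z hZ) (sle_comp T Z)
  funext e
  rcases hsle e with h | h
  · -- comp X T e = 0, so X e = 0 and T e = 0
    have hx : X e = 0 := by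
      by_contra hx
      simp [comp, hx] at h
    have ht : T e = 0 := by simpa [comp, hx] using h
    have := congrFun hTZ e
    simp [comp, ht] at this
    rw [this, h]
  · exact h.symm

/-- Topes exist. -/
lemma exists_tope [Fintype E] (L : Set (E → SignType)) (hne : L.Nonempty) :
    ∃ T, IsTope L T := by
  obtain ⟨T, hTL, hmin⟩ := Set.exists_min_image L (fun Y => (zset Y).card) (Set.toFinite L) hne
  refine ⟨T, hTL, fun Z hZ hsle => ?_⟩
  have hsub : zset Z ⊆ zset T := sle_zset hsle
  have heq : zset Z = zset T := Finset.eq_of_subset_of_card_le hsub (hmin Z hZ)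
  exact eq_of_sle_zset hsle heq

theorem mandel [Fintype E] (L : Set (E → SignType))
    (hne : L.Nonempty) (hC : Comp L) (hSym : SymCond L) (hSE : SE L) :
    L = {X : E → SignType | ∀ T, IsTope L T → IsTope L (comp X T)} := by
  obtain ⟨T₀, hT₀⟩ := exists_tope L hne
  have key : ∀ n (X : E → SignType), (zset X).card = n →
      (∀ T, IsTope L T → IsTope L (comp X T)) → X ∈ L := by
    intro n
    induction n using Nat.strong_induction_on with
    | _ n IH =>
      intro X hcard hX
      -- the set of covectors above X
      set M : Set (E → SignType) := {Z | Z ∈ L ∧ sle X Z} with hM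
      have hMne : M.Nonempty := ⟨comp X T₀, (hX T₀ hT₀).1, sle_comp X T₀⟩
      obtain ⟨Z, ⟨hZL, hZsle⟩, hmax⟩ :=
        Set.exists_max_image M (fun Y => (zset Y).card) (Set.toFinite M) hMne
      by_cases hzz : zset Z = zset X
      · have : Z = X := eq_of_sle_zset hZsle hzz
        rwa [this] at hZL
      · -- pick g with X g = 0, Z g ≠ 0
        have hsub : zset Z ⊆ zset X := sle_zset hZsle
        obtain ⟨g, hgX, hgZ⟩ := Finset.exists_of_ssubset (lt_of_le_of_ne hsub hzz)
        rw [mem_zset] at hgX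
        have hgZ' : Z g ≠ 0 := fun h => hgZ ((mem_zset Z g).2 h)
        -- the reflection W = X ∘ (-Z)
        set W : E → SignType := comp X (-Z) with hW
        have hWe : ∀ e, W e = if X e = 0 then -(Z e) else X e := by
          intro e; simp [hW, comp]
        have hWz : zset W = zset Z := by
          ext e
          rw [mem_zset, mem_zset, hWe]
          by_cases hx : X e = 0
          · rw [if_pos hx]; exact signNegZero (Z e)
          · rw [if_neg hx]
            constructor
            · intro h; exact absurd h hx
            · intro h
              have h' : X e = Z e := (hZsle e).resolve_left hx
              exact absurd (h'.trans h) hx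
        have hWrhs : ∀ T, IsTope L T → IsTope L (comp W T) := by
          intro T hT
          rw [hW, comp_assoc']
          exact hX _ (tope_comp hC (hSym Z hZL) hT)
        have hltn : (zset W).card < n := by
          rw [hWz, ← hcard]
          exact Finset.card_lt_card (lt_of_le_of_ne hsub hzz)
        have hWL : W ∈ L := IH _ hltn W rfl hWrhs
        -- strong elimination at g between Z and W
        have hWg : W g = -(Z g) := by rw [hWe g, if_pos hgX]
        have hZg : Z g = -W g := by rw [hWg, neg_neg]
        obtain ⟨Z', hZ'L, hZ'g, hZ'f⟩ := hSE Z hZL W hWL g hZg hgZ'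
        -- Z' is above X
        have hZ'sle : sle X Z' := by
          intro e
          by_cases hx : X e = 0
          · exact Or.inl hx
          · right
            have hZe : Z e = X e := ((hZsle e).resolve_left hx).symm
            have hWe' : W e = X e := by rw [hWe e, if_neg hx]
            have hcond : ¬(Z e = -W e ∧ Z e ≠ 0) := by
              rintro ⟨h1, h2⟩
              rw [hZe, hWe'] at h1
              exact hx (signEqNegSelf _ h1)
            have hco := hZ'f e hcond
            rw [hco]
            simp [comp, hZe, hx]
        -- Z' has strictly more zeros than Z
        have hZ'z : zset Z ⊆ zset Z' := by
          intro e he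
          rw [mem_zset] at he
          rw [mem_zset]
          have hWe0 : W e = 0 := (mem_zset W e).1 (hWz ▸ (mem_zset Z e).2 he)
          have hcond : ¬(Z e = -W e ∧ Z e ≠ 0) := by
            rintro ⟨_, h2⟩; exact h2 he
          rw [hZ'f e hcond]
          simp [comp, he, hWe0]
        have hss : zset Z ⊂ zset Z' :=
          (Finset.ssubset_iff_of_subset hZ'z).2 ⟨g, (mem_zset _ _).2 hZ'g, hgZ⟩
        have hcardlt : (zset Z).card < (zset Z').card := Finset.card_lt_card hss
        exact absurd (hmax Z' ⟨hZ'L, hZ'sle⟩) (by omega)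
  ext X
  constructor
  · intro hXL T hT
    exact tope_comp hC hXL hT
  · intro hX
    exact key _ X rfl hX
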